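/- Three-point inequality with strong convexity along a block (Lemma 1, second part). Let X = X₁ × ⋯ × Xₙ be a product of convex subsets of finite-dimensional real inner product spaces, f : X → ℝ a lower semicontinuous convex function that is λ-strongly convex, and d(x) = Σ_i d_i(x^{(i)}) with each d_i convex and continuously differentiable. If z minimizes Ψ(x) := f(x) + d(x) over X, and x ∈ X differs from z only in block i, with x^{(i)} = z^{(i)} + y, then Ψ(x) ≥ Ψ(z) + V(z,x) + (λ/2)·‖y‖²_{(i)}, where V(z,x) = d(x) − d(z) − ⟨∇d(z), x − z⟩. -/

import Mathlib

open RealInnerProductSpace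

/-- Lemma 1 (second part): three-point inequality with strong convexity along a
block.  `X = X₁ × ⋯ × Xₙ`, `f` lower semicontinuous, convex and `λ`-strongly
convex (w.r.t. the norm `‖u‖² = Σ_j ‖u_j‖²`), `d(x) = Σ_j d_j(x_j)` with each
`d_j` convex and continuously differentiable.  If `z` minimizes `Ψ = f + d`
over `X` and `x ∈ X` differs from `z` only in block `i`, with `x_i = z_i + y`,
then `Ψ(x) ≥ Ψ(z) + V(z,x) + (λ/2)‖y‖²`. -/
theorem three_point_inequality_strongly_convex_block
    (n : ℕ) (Ei : Fin n → Type*)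
    [∀ i, NormedAddCommGroup (Ei i)] [∀ i, InnerProductSpace ℝ (Ei i)]
    [∀ i, FiniteDimensional ℝ (Ei i)]
    (Xi : ∀ i, Set (Ei i)) (hXi : ∀ i, Convex ℝ (Xi i))
    (f : (∀ i, Ei i) → ℝ) (lam : ℝ) (hlam : 0 ≤ lam)
    (hf_lsc : LowerSemicontinuousOn f (Set.univ.pi Xi))
    (hf_conv : ConvexOn ℝ (Set.univ.pi Xi) f)
    (hf_strong : ∀ u ∈ Set.univ.pi Xi, ∀ v ∈ Set.univ.pi Xi, ∀ a : ℝ,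
      0 ≤ a → a ≤ 1 →
      f (a • u + (1 - a) • v) ≤ a * f u + (1 - a) * f v
        - lam / 2 * a * (1 - a) * ∑ j, ‖u j - v j‖ ^ 2)
    (d : ∀ i, Ei i → ℝ)
    (hd_conv : ∀ i, ConvexOn ℝ (Xi i) (d i))
    (hd_smooth : ∀ i, ContDiff ℝ 1 (d i))
    (z : ∀ i, Ei i) (hzX : z ∈ Set.univ.pi Xi)
    (hz : IsMinOn (fun x => f x + ∑ j, d j (x j)) (Set.univ.pi Xi) z)
    (i : Fin n) (y : Ei i) (x : ∀ j, Ei j) (hxX : x ∈ Set.univ.pi Xi)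
    (hagree : ∀ j, j ≠ i → x j = z j) (hxi : x i = z i + y) :
    f z + (∑ j, d j (z j))
      + (∑ j, (d j (x j) - d j (z j) - ⟪gradient (d j) (z j), x j - z j⟫))
      + lam / 2 * ‖y‖ ^ 2
      ≤ f x + ∑ j, d j (x j) := by

  -- the function along the segment from `z` to `x`
  set φ : ℝ → ℝ := fun t => ∑ j, d j (z j + t • (x j - z j)) with hφdef
  set L : ℝ := ∑ j, ⟪gradient (d j) (z j), x j - z j⟫ with hLdef
  have hφ0 : φ 0 = ∑ j, d j (z j) := by simp [hφdef]
  have hS : ∑ j, ‖x j - z j‖ ^ 2 = ‖y‖ ^ 2 := by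
    rw [Finset.sum_eq_single i]
    · rw [hxi]; simp
    · intro j _ hj; rw [hagree j hj]; simp
    · simp
  have hderiv : HasDerivAt φ L 0 := by
    apply HasDerivAt.fun_sum
    intro j _
    have hdiff : DifferentiableAt ℝ (d j) (z j) :=
      ((hd_smooth j).differentiable one_ne_zero).differentiableAt
    have hg : HasGradientAt (d j) (gradient (d j) (z j)) (z j) := hdiff.hasGradientAt
    have hline : HasDerivAt (fun t : ℝ => z j + t • (x j - z j)) (x j - z j) 0 := by
      simpa using ((hasDerivAt_id (0:ℝ)).smul_const (x j - z j)).const_add (z j)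
    have hg' : HasFDerivAt (d j) (InnerProductSpace.toDual ℝ (Ei j) (gradient (d j) (z j)))
        (z j + (0:ℝ) • (x j - z j)) := by simpa using hg.hasFDerivAt
    have hcomp := hg'.comp_hasDerivAt 0 hline
    simpa [Function.comp_def] using hcomp
  have key : ∀ t : ℝ, 0 < t → t ≤ 1 →
      f z - f x + lam / 2 * (1 - t) * ‖y‖ ^ 2 ≤ (φ t - φ 0) / t := by
    intro t ht ht1
    have hwX : (t • x + (1 - t) • z) ∈ Set.univ.pi Xi := by
      intro j _
      exact hXi j (hxX j (Set.mem_univ j)) (hzX j (Set.mem_univ j)) ht.le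
        (by linarith) (by ring)
    have hweq : ∀ j, (t • x + (1 - t) • z) j = z j + t • (x j - z j) := by
      intro j
      show t • x j + (1 - t) • z j = z j + t • (x j - z j)
      rw [smul_sub, sub_smul, one_smul]; abel
    have hmin := isMinOn_iff.mp hz _ hwX
    have hstr := hf_strong x hxX z hzX t ht.le ht1
    have hφt : φ t = ∑ j, d j ((t • x + (1 - t) • z) j) := by
      apply Finset.sum_congr rfl
      intro j _; rw [hweq j]
    rw [hS] at hstr
    rw [le_div_iff₀ ht]
    have hmin' : f z + φ 0 ≤ f (t • x + (1 - t) • z) + φ t := by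
      rw [hφ0, hφt]; exact hmin
    nlinarith [hmin', hstr]
  have hslope : Filter.Tendsto (fun t => (φ t - φ 0) / t) (nhdsWithin 0 (Set.Ioi 0))
      (nhds L) := by
    have := hasDerivAt_iff_tendsto_slope.mp hderiv
    have h2 := this.mono_left (nhdsWithin_mono 0 (by
      intro t ht; exact ne_of_gt ht : Set.Ioi (0:ℝ) ⊆ {(0:ℝ)}ᶜ))
    refine h2.congr (fun t => ?_)
    simp [slope_def_field]
  have hlin : Filter.Tendsto (fun t : ℝ => f z - f x + lam / 2 * (1 - t) * ‖y‖ ^ 2)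
      (nhdsWithin 0 (Set.Ioi 0)) (nhds (f z - f x + lam / 2 * ‖y‖ ^ 2)) := by
    have : Filter.Tendsto (fun t : ℝ => f z - f x + lam / 2 * (1 - t) * ‖y‖ ^ 2)
        (nhds 0) (nhds (f z - f x + lam / 2 * (1 - (0:ℝ)) * ‖y‖ ^ 2)) :=
      tendsto_const_nhds.add
        ((((tendsto_const_nhds.sub Filter.tendsto_id).const_mul (lam / 2)).mul_const (‖y‖ ^ 2)))
    simpa using this.mono_left nhdsWithin_le_nhds
  have hLge : f z - f x + lam / 2 * ‖y‖ ^ 2 ≤ L := by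
    refine le_of_tendsto_of_tendsto hlin hslope ?_
    filter_upwards [Ioc_mem_nhdsGT_of_mem (by norm_num : (0:ℝ) ∈ Set.Ico 0 1)] with t ht
    exact key t ht.1 ht.2
  have hsum : (∑ j, (d j (x j) - d j (z j) - ⟪gradient (d j) (z j), x j - z j⟫))
      = (∑ j, d j (x j)) - (∑ j, d j (z j)) - L := by
    rw [hLdef, ← Finset.sum_sub_distrib, ← Finset.sum_sub_distrib]
  rw [hsum]
  linarith [hLge]
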